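/- Let A > 1 and L > e be reals with L^{1/L} ≤ √A (equivalently 2·log L ≤ L·log A). Then for every integer n ≥ 1 and all integers k, m with 0 ≤ k, m ≤ n−1: ∑_{j > L·n} A^{−2j}·binom(j,k)·binom(j,m) ≤ (A/(A−1))·exp((2 − L·log A)·n), where the sum ranges over integers j > L·n. -/

import Mathlib

open Real

/-- `n^n ≤ e^n · n!`. -/
lemma aux_pow_le_exp_mul_factorial (n : ℕ) : (n : ℝ) ^ n ≤ Real.exp n * n.factorial := by
  have h1 : (n : ℝ) ^ n / n.factorial ≤ Real.exp n := by
    calc (n : ℝ) ^ n / n.factorial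
        ≤ ∑ i ∈ Finset.range (n + 1), (n : ℝ) ^ i / i.factorial := by
          refine Finset.single_le_sum (f := fun i => (n : ℝ) ^ i / i.factorial) ?_ ?_
          · intro i _
            positivity
          · simp
      _ ≤ Real.exp n := Real.sum_le_exp_of_nonneg (by positivity) _
  have hfac : (0 : ℝ) < n.factorial := by exact_mod_cast n.factorial_pos
  calc (n : ℝ) ^ n = (n : ℝ) ^ n / n.factorial * n.factorial := by field_simp
    _ ≤ Real.exp n * n.factorial := mul_le_mul_of_nonneg_right h1 hfac.le

/-- `C(j,l) ≤ j^n / n!` whenever `l ≤ n ≤ j`. -/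
lemma aux_choose_le (j n l : ℕ) (hl : l ≤ n) (hnj : n ≤ j) :
    ((j.choose l : ℝ)) ≤ (j : ℝ) ^ n / n.factorial := by
  have h1 : ((j.choose l : ℝ)) ≤ (j : ℝ) ^ l / l.factorial := by
    have := Nat.choose_le_pow_div (α := ℝ) l j
    simpa using this
  refine h1.trans ?_
  have hl0 : (0 : ℝ) < l.factorial := by exact_mod_cast l.factorial_pos
  have hn0 : (0 : ℝ) < n.factorial := by exact_mod_cast n.factorial_pos
  rw [div_le_div_iff₀ hl0 hn0]
  have hnat : j ^ l * n.factorial ≤ j ^ n * l.factorial := by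
    have hfac : (n - (n - l)).factorial * n.descFactorial (n - l) = n.factorial :=
      Nat.factorial_mul_descFactorial (Nat.sub_le n l)
    rw [Nat.sub_sub_self hl] at hfac
    have hdesc : n.descFactorial (n - l) ≤ j ^ (n - l) :=
      (Nat.descFactorial_le_pow n (n - l)).trans (Nat.pow_le_pow_left hnj _)
    calc j ^ l * n.factorial = j ^ l * (l.factorial * n.descFactorial (n - l)) := by rw [hfac]
      _ ≤ j ^ l * (l.factorial * j ^ (n - l)) :=
          Nat.mul_le_mul_left _ (Nat.mul_le_mul_left _ hdesc)
      _ = j ^ l * j ^ (n - l) * l.factorial := by ring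
      _ = j ^ n * l.factorial := by rw [← pow_add, Nat.add_sub_cancel' hl]
  exact_mod_cast hnat

/-- Tail bound for the entries of the moment matrix: for `A > 1`, `L > e` with
`2 log L ≤ L log A` (i.e. `L^{1/L} ≤ √A`), `n ≥ 1` and `k, m ≤ n-1`,
`∑_{j > Ln} A^{-2j} C(j,k) C(j,m) ≤ (A/(A-1)) exp((2 - L log A) n)`. -/
theorem stmt_16 (A L : ℝ) (hA : 1 < A) (hL : Real.exp 1 < L)
    (hLA : 2 * Real.log L ≤ L * Real.log A)
    (n : ℕ) (hn : 1 ≤ n) (k m : ℕ) (hk : k ≤ n - 1) (hm : m ≤ n - 1) :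
    (∑' j : {j : ℕ // L * n < (j : ℝ)},
        (A ^ (2 * (j : ℕ)))⁻¹ * ((j : ℕ).choose k : ℝ) * ((j : ℕ).choose m : ℝ))
      ≤ (A / (A - 1)) * Real.exp ((2 - L * Real.log A) * n) := by
  have hA0 : (0 : ℝ) < A := lt_trans one_pos hA
  have hlogA : 0 < Real.log A := Real.log_pos hA
  have hn0 : (0 : ℝ) < n := by exact_mod_cast hn
  have hL1 : (1 : ℝ) < L := lt_trans (by nlinarith [Real.add_one_le_exp (1:ℝ)]) hL
  have hL0 : (0 : ℝ) < L := lt_trans one_pos hL1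
  set r : ℝ := A⁻¹ with hr
  have hr0 : 0 ≤ r := by positivity
  have hr1 : r < 1 := inv_lt_one_of_one_lt₀ hA
  set j₀ : ℕ := ⌊L * n⌋₊ + 1 with hj₀def
  have hj₀ : L * n < j₀ := by
    rw [hj₀def]
    push_cast
    exact Nat.lt_floor_add_one (L * n)
  have hmem : ∀ j : ℕ, L * n < (j : ℝ) → j₀ ≤ j := by
    intro j hj
    have : ⌊L * n⌋₊ < j := (Nat.floor_lt (by positivity)).mpr hj
    omega
  -- key pointwise bound
  have key : ∀ j : ℕ, L * n < (j : ℝ) →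
      (A ^ (2 * j))⁻¹ * (j.choose k : ℝ) * (j.choose m : ℝ)
        ≤ Real.exp (2 * n) * r ^ j := by
    intro j hj
    have hnjR : (n : ℝ) ≤ j := by nlinarith
    have hnj : n ≤ j := by exact_mod_cast hnjR
    have hfac : (0 : ℝ) < n.factorial := by exact_mod_cast n.factorial_pos
    have hcb : ∀ l : ℕ, l ≤ n - 1 → (j.choose l : ℝ) ≤ Real.exp n * ((j : ℝ) / n) ^ n := by
      intro l hl
      have h1 : (j.choose l : ℝ) ≤ (j : ℝ) ^ n / n.factorial :=
        aux_choose_le j n l (le_trans hl (Nat.sub_le n 1)) hnj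
      refine h1.trans ?_
      have h2 : (n : ℝ) ^ n ≤ Real.exp n * n.factorial := aux_pow_le_exp_mul_factorial n
      have h3 : (j : ℝ) ^ n = ((j : ℝ) / n) ^ n * (n : ℝ) ^ n := by
        rw [← mul_pow]
        field_simp
      rw [h3, div_le_iff₀ hfac]
      have hjn0 : (0 : ℝ) ≤ ((j : ℝ) / n) ^ n := by positivity
      calc ((j : ℝ) / n) ^ n * (n : ℝ) ^ n ≤ ((j : ℝ) / n) ^ n * (Real.exp n * n.factorial) :=
            mul_le_mul_of_nonneg_left h2 hjn0
        _ = Real.exp n * ((j : ℝ) / n) ^ n * n.factorial := by ring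
    -- ratio bound : (j/n)^(2n) ≤ A^j
    have hpow : ((j : ℝ) / n) ^ (2 * n) ≤ A ^ j := by
      set t : ℝ := (j : ℝ) / n with ht
      have htL : L < t := by
        rw [ht, lt_div_iff₀ hn0]
        linarith [hj]
      have ht0 : 0 < t := lt_trans hL0 htL
      have hanti : Real.log t / t ≤ Real.log L / L :=
        Real.log_div_self_antitoneOn (Set.mem_setOf_eq ▸ hL.le)
          (Set.mem_setOf_eq ▸ (hL.le.trans htL.le)) htL.le
      have h1 : Real.log t ≤ Real.log L / L * t := by
        have := mul_le_mul_of_nonneg_right hanti ht0.le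
        rwa [div_mul_cancel₀ _ ht0.ne'] at this
      have hc : 2 * (Real.log L / L) ≤ Real.log A := by
        rw [← mul_div_assoc, div_le_iff₀ hL0]
        linarith [hLA]
      have h2lt : 2 * Real.log t ≤ t * Real.log A := by
        calc 2 * Real.log t ≤ 2 * (Real.log L / L * t) := by linarith
          _ = (2 * (Real.log L / L)) * t := by ring
          _ ≤ Real.log A * t := mul_le_mul_of_nonneg_right hc ht0.le
          _ = t * Real.log A := mul_comm _ _
      have hAj : A ^ j = Real.exp ((j : ℝ) * Real.log A) := by
        rw [Real.exp_nat_mul, Real.exp_log hA0]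
      have htpow : t ^ (2 * n) = Real.exp (((2 * n : ℕ) : ℝ) * Real.log t) := by
        rw [Real.exp_nat_mul, Real.exp_log ht0]
      rw [hAj, htpow, Real.exp_le_exp]
      push_cast
      have hjt : (j : ℝ) = t * n := by rw [ht]; field_simp
      calc (2 * (n : ℝ)) * Real.log t = (n : ℝ) * (2 * Real.log t) := by ring
        _ ≤ (n : ℝ) * (t * Real.log A) := mul_le_mul_of_nonneg_left h2lt hn0.le
        _ = (j : ℝ) * Real.log A := by rw [hjt]; ring
    -- combine
    have hck := hcb k hk
    have hcm := hcb m hm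
    have hcm0 : (0 : ℝ) ≤ (j.choose m : ℝ) := by positivity
    have hprod : (j.choose k : ℝ) * (j.choose m : ℝ) ≤ Real.exp (2 * n) * A ^ j := by
      have h1 : (j.choose k : ℝ) * (j.choose m : ℝ)
          ≤ (Real.exp n * ((j : ℝ) / n) ^ n) * (Real.exp n * ((j : ℝ) / n) ^ n) :=
        mul_le_mul hck hcm hcm0 (by positivity)
      have h2 : (Real.exp n * ((j : ℝ) / n) ^ n) * (Real.exp n * ((j : ℝ) / n) ^ n)
          = Real.exp (2 * n) * ((j : ℝ) / n) ^ (2 * n) := by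
        rw [pow_mul', sq, show (2 : ℝ) * (n : ℝ) = (n : ℝ) + (n : ℝ) by ring, Real.exp_add]
        ring
      refine h1.trans ?_
      rw [h2]
      exact mul_le_mul_of_nonneg_left hpow (Real.exp_pos _).le
    have hrid : Real.exp (2 * n) * r ^ j = (Real.exp (2 * n) * A ^ j) * (A ^ (2 * j))⁻¹ := by
      rw [hr, inv_pow, two_mul j, pow_add]
      field_simp
    calc (A ^ (2 * j))⁻¹ * (j.choose k : ℝ) * (j.choose m : ℝ)
        = ((j.choose k : ℝ) * (j.choose m : ℝ)) * (A ^ (2 * j))⁻¹ := by ring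
      _ ≤ (Real.exp (2 * n) * A ^ j) * (A ^ (2 * j))⁻¹ :=
          mul_le_mul_of_nonneg_right hprod (by positivity)
      _ = Real.exp (2 * n) * r ^ j := hrid.symm
  -- summability
  have hgeo : Summable (fun i : ℕ => r ^ i) := summable_geometric_of_lt_one hr0 hr1
  have hgsum : Summable (fun i : ℕ => (Real.exp (2 * n) * r ^ j₀) * r ^ i) :=
    hgeo.mul_left _
  have hbig : Summable (fun i : ℕ => Real.exp (2 * n) * r ^ i) := hgeo.mul_left _
  have hfsum : Summable (fun p : {j : ℕ // L * n < (j : ℝ)} =>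
      (A ^ (2 * (p : ℕ)))⁻¹ * ((p : ℕ).choose k : ℝ) * ((p : ℕ).choose m : ℝ)) := by
    refine Summable.of_nonneg_of_le (fun p => by positivity) (fun p => key p p.2) ?_
    exact hbig.subtype _
  calc (∑' j : {j : ℕ // L * n < (j : ℝ)},
        (A ^ (2 * (j : ℕ)))⁻¹ * ((j : ℕ).choose k : ℝ) * ((j : ℕ).choose m : ℝ))
      ≤ ∑' i : ℕ, (Real.exp (2 * n) * r ^ j₀) * r ^ i := by
        refine Summable.tsum_le_tsum_of_inj (fun p => (p : ℕ) - j₀) ?_ ?_ ?_ hfsum hgsum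
        · intro a b hab
          have ha := hmem a a.2
          have hb := hmem b b.2
          have hab' : (a : ℕ) - j₀ = (b : ℕ) - j₀ := hab
          exact Subtype.ext (by omega)
        · intro c _
          positivity
        · intro p
          have hp := hmem p p.2
          have : (Real.exp (2 * n) * r ^ j₀) * r ^ ((p : ℕ) - j₀)
              = Real.exp (2 * n) * r ^ (p : ℕ) := by
            rw [mul_assoc, ← pow_add, Nat.add_sub_cancel' hp]
          rw [this]
          exact key p p.2
    _ = (Real.exp (2 * n) * r ^ j₀) * (1 - r)⁻¹ := by
        rw [tsum_mul_left, tsum_geometric_of_lt_one hr0 hr1]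
    _ ≤ (A / (A - 1)) * Real.exp ((2 - L * Real.log A) * n) := by
        have hinv : (1 - r)⁻¹ = A / (A - 1) := by
          have h1 : 1 - r = (A - 1) / A := by
            rw [hr]
            field_simp
          rw [h1, inv_div]
        have hr_exp : r ^ j₀ ≤ Real.exp (-(L * Real.log A) * n) := by
          have h1 : r ^ j₀ = Real.exp (-((j₀ : ℝ) * Real.log A)) := by
            have hAe : r = Real.exp (-(Real.log A)) := by
              rw [hr, ← Real.log_inv, Real.exp_log (by positivity)]
            rw [hAe, ← Real.exp_nat_mul]
            congr 1
            ring
          rw [h1, Real.exp_le_exp]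
          nlinarith [hj₀.le, hlogA]
        have hAA1 : (0 : ℝ) ≤ A / (A - 1) := div_nonneg hA0.le (by linarith)
        calc (Real.exp (2 * n) * r ^ j₀) * (1 - r)⁻¹
            = (A / (A - 1)) * (Real.exp (2 * n) * r ^ j₀) := by rw [hinv]; ring
          _ ≤ (A / (A - 1)) * (Real.exp (2 * n) * Real.exp (-(L * Real.log A) * n)) := by
              refine mul_le_mul_of_nonneg_left ?_ hAA1
              exact mul_le_mul_of_nonneg_left hr_exp (Real.exp_pos _).le
          _ = (A / (A - 1)) * Real.exp ((2 - L * Real.log A) * n) := by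
              rw [← Real.exp_add]
              congr 1
              ring
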